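/- arXiv:math/0504241 — 2 statements merged into one kernel-verified Lean document; each statement's English description precedes it below -/
import Mathlib

section
/- Let J be a locally compact σ-compact Hausdorff topological group and let V ⊆ J be a neighbourhood of the identity element. Then there exists a compact normal subgroup K of J contained in V such that the quotient group J/K is second countable. -/
open Set Filter Topology Pointwise

/-- Uniform conjugation: for a compact set `F` and a neighbourhood `U` of `1`, there is a
neighbourhood `W` of `1` with `x * y * x⁻¹ ∈ U` for all `x ∈ F`, `y ∈ W`. -/
theorem KK_conj_aux {J : Type*} [Group J] [TopologicalSpace J] [IsTopologicalGroup J]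
    {F U : Set J} (hF : IsCompact F) (hU : U ∈ 𝓝 (1 : J)) :
    ∃ W ∈ 𝓝 (1 : J), ∀ x ∈ F, ∀ y ∈ W, x * y * x⁻¹ ∈ U := by
  set s : Set (J × J) := (fun p : J × J => p.1 * p.2 * p.1⁻¹) ⁻¹' U with hs
  have hc : Continuous fun p : J × J => p.1 * p.2 * p.1⁻¹ := by continuity
  have hmem : ∀ x ∈ F, s ∈ 𝓝 x ×ˢ 𝓝 (1 : J) := by
    intro x hx
    rw [← nhds_prod_eq]
    refine hc.continuousAt.preimage_mem_nhds ?_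
    simpa using hU
  have h := hF.mem_nhdsSet_prod_of_forall hmem
  rcases Filter.mem_prod_iff.mp h with ⟨A, hA, W, hW, hAW⟩
  refine ⟨W, hW, fun x hx y hy => ?_⟩
  exact hAW (Set.mk_mem_prod (subset_of_mem_nhdsSet hA hx) hy)

/-- The basic step of the Kakutani–Kodaira construction. -/
theorem KK_step {J : Type*} [Group J] [TopologicalSpace J] [IsTopologicalGroup J]
    [LocallyCompactSpace J] [T2Space J]
    {F U : Set J} (hF : IsCompact F) (hU : U ∈ 𝓝 (1 : J)) :
    ∃ W : Set J, IsCompact W ∧ W ∈ 𝓝 (1 : J) ∧ W⁻¹ = W ∧ W * W ⊆ U ∧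
      ∀ x ∈ F, ∀ y ∈ W, x * y * x⁻¹ ∈ U := by
  obtain ⟨W₁, hW₁o, hW₁1, hW₁U⟩ := exists_open_nhds_one_mul_subset hU
  obtain ⟨W₂, hW₂, hconj⟩ := KK_conj_aux hF hU
  set O : Set J := W₁ ∩ interior W₂ with hO
  have hOopen : IsOpen O := hW₁o.inter isOpen_interior
  have hO1 : (1 : J) ∈ O := ⟨hW₁1, mem_interior_iff_mem_nhds.2 hW₂⟩
  obtain ⟨C, hCcomp, hC1, hCO⟩ := exists_compact_subset hOopen hO1
  refine ⟨C ∩ C⁻¹, hCcomp.inter_right hCcomp.inv.isClosed, ?_, ?_, ?_, ?_⟩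
  · have hC : C ∈ 𝓝 (1 : J) := mem_interior_iff_mem_nhds.1 hC1
    exact Filter.inter_mem hC (inv_mem_nhds_one J hC)
  · rw [Set.inter_inv, inv_inv, Set.inter_comm]
  · intro z hz
    rcases hz with ⟨a, ha, b, hb, rfl⟩
    exact hW₁U (Set.mul_mem_mul (hCO ha.1).1 (hCO hb.1).1)
  · intro x hx y hy
    exact hconj x hx y (interior_subset (hCO hy.1).2)

/-- A σ-compact topological group whose neighbourhood filter at `1` is countably generated
is second countable. -/
theorem KK_secondCountable {Q : Type*} [Group Q] [TopologicalSpace Q] [IsTopologicalGroup Q]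
    [SigmaCompactSpace Q] (h : (𝓝 (1 : Q)).IsCountablyGenerated) :
    SecondCountableTopology Q := by
  haveI := h
  letI : UniformSpace Q := IsTopologicalGroup.rightUniformSpace Q
  haveI : (uniformity Q).IsCountablyGenerated := Filter.comap.isCountablyGenerated _ _
  haveI : TopologicalSpace.PseudoMetrizableSpace Q := UniformSpace.pseudoMetrizableSpace
  letI := TopologicalSpace.pseudoMetrizableSpacePseudoMetric Q
  exact EMetric.secondCountable_of_sigmaCompact Q

/-- Kakutani–Kodaira: in a locally compact σ-compact Hausdorff group `J`, every neighbourhood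
`V` of the identity contains a compact normal subgroup `K` such that `J/K` is second
countable. -/
theorem exists_compact_normal_subgroup_secondCountable_quotient
    {J : Type*} [Group J] [TopologicalSpace J] [IsTopologicalGroup J]
    [LocallyCompactSpace J] [SigmaCompactSpace J] [T2Space J]
    (V : Set J) (hV : V ∈ nhds (1 : J)) :
    ∃ K : Subgroup J, K.Normal ∧ IsCompact (K : Set J) ∧ (K : Set J) ⊆ V ∧
      SecondCountableTopology (J ⧸ K) := by
  classical
  -- base of the recursion
  obtain ⟨W₀, hW₀c, hW₀n, hW₀s, hW₀mul, -⟩ := KK_step (F := (∅ : Set J)) isCompact_empty hV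
  have hW₀V : W₀ ⊆ V := fun w hw => by
    have : w * 1 ∈ W₀ * W₀ := Set.mul_mem_mul hw (mem_of_mem_nhds hW₀n)
    simpa using hW₀mul this
  -- recursive step
  have hstep : ∀ n : ℕ, ∀ W : {W : Set J // IsCompact W ∧ W ∈ 𝓝 (1 : J) ∧ W⁻¹ = W},
      ∃ W' : {W : Set J // IsCompact W ∧ W ∈ 𝓝 (1 : J) ∧ W⁻¹ = W},
        (W' : Set J) * W' ⊆ W ∧
        ∀ x ∈ compactCovering J n, ∀ y ∈ (W' : Set J), x * y * x⁻¹ ∈ (W : Set J) := by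
    intro n W
    obtain ⟨W', h1, h2, h3, h4, h5⟩ :=
      KK_step (isCompact_compactCovering J n) W.2.2.1
    exact ⟨⟨W', h1, h2, h3⟩, h4, h5⟩
  choose g hg₁ hg₂ using hstep
  set Vs : ℕ → {W : Set J // IsCompact W ∧ W ∈ 𝓝 (1 : J) ∧ W⁻¹ = W} :=
    fun n => Nat.rec ⟨W₀, hW₀c, hW₀n, hW₀s⟩ g n with hVs
  set Vt : ℕ → Set J := fun n => (Vs n : Set J) with hVt
  have hVcomp : ∀ n, IsCompact (Vt n) := fun n => (Vs n).2.1
  have hVnhds : ∀ n, Vt n ∈ 𝓝 (1 : J) := fun n => (Vs n).2.2.1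
  have hVsymm : ∀ n, (Vt n)⁻¹ = Vt n := fun n => (Vs n).2.2.2
  have hsucc : ∀ n, Vs (n + 1) = g n (Vs n) := fun n => rfl
  have hVmul : ∀ n, Vt (n + 1) * Vt (n + 1) ⊆ Vt n := fun n => by
    rw [hVt]; simp only; rw [hsucc n]; exact hg₁ n (Vs n)
  have hVconj : ∀ n, ∀ x ∈ compactCovering J n, ∀ y ∈ Vt (n + 1), x * y * x⁻¹ ∈ Vt n :=
    fun n => by rw [hVt]; simp only; rw [hsucc n]; exact hg₂ n (Vs n)
  have hmono : ∀ n, Vt (n + 1) ⊆ Vt n := fun n y hy => by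
    have : (1 : J) * y ∈ Vt (n + 1) * Vt (n + 1) :=
      Set.mul_mem_mul (mem_of_mem_nhds (hVnhds (n + 1))) hy
    simpa using hVmul n this
  have hanti : Antitone Vt := antitone_nat_of_succ_le hmono
  -- the subgroup
  set K : Subgroup J :=
    { carrier := ⋂ n, Vt n
      one_mem' := mem_iInter.2 fun n => mem_of_mem_nhds (hVnhds n)
      mul_mem' := fun {a b} ha hb => mem_iInter.2 fun n =>
        hVmul n (Set.mul_mem_mul (mem_iInter.1 ha (n + 1)) (mem_iInter.1 hb (n + 1)))
      inv_mem' := fun {a} ha => mem_iInter.2 fun n => by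
        rw [← hVsymm n]; exact Set.inv_mem_inv.2 (mem_iInter.1 ha n) } with hK
  have hKcar : (K : Set J) = ⋂ n, Vt n := rfl
  have hKV0 : (K : Set J) ⊆ Vt 0 := by rw [hKcar]; exact iInter_subset _ 0
  -- normality
  have hnormal : K.Normal := by
    constructor
    intro k hk gg
    obtain ⟨N, hN⟩ := exists_mem_compactCovering gg
    have key : ∀ m, N ≤ m → gg * k * gg⁻¹ ∈ Vt m := fun m hm =>
      hVconj m gg (compactCovering_subset J hm hN) k (mem_iInter.1 hk (m + 1))
    refine mem_iInter.2 fun n => ?_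
    exact hanti (le_max_left n N) (key (max n N) (le_max_right n N))
  -- compactness
  have hKclosed : IsClosed (K : Set J) := by
    rw [hKcar]; exact isClosed_iInter fun n => (hVcomp n).isClosed
  have hKcomp : IsCompact (K : Set J) := (hVcomp 0).of_isClosed_subset hKclosed hKV0
  -- K ⊆ V
  have hKsubV : (K : Set J) ⊆ V := hKV0.trans hW₀V
  haveI := hnormal
  -- σ-compactness of the quotient
  haveI : SigmaCompactSpace (J ⧸ K) := by
    rw [← isSigmaCompact_univ_iff]
    have hr := isSigmaCompact_range (QuotientGroup.isOpenQuotientMap_mk (N := K)).continuous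
    rwa [Set.range_eq_univ.2 QuotientGroup.mk_surjective] at hr
  -- the images of the `Vt n` form a countable basis at the identity of the quotient
  have hkey : ∀ T : Set J, IsOpen T → (K : Set J) ⊆ T → ∃ n, Vt n ⊆ T := by
    intro T hTo hKT
    by_contra hcon
    push_neg at hcon
    obtain ⟨t, ht⟩ := (hVcomp 0).elim_finite_subfamily_closed
      (fun n => Vt n ∩ Tᶜ) (fun n => (hVcomp n).isClosed.inter hTo.isClosed_compl) (by
        rw [← hKcar] at *
        apply Set.eq_empty_of_forall_notMem
        rintro x ⟨hx0, hx⟩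
        rw [Set.mem_iInter] at hx
        have hxK : x ∈ (K : Set J) := mem_iInter.2 fun n => (hx n).1
        exact (hx 0).2 (hKT hxK))
    obtain ⟨y, hy, hyT⟩ := Set.not_subset.1 (hcon (t.sup id))
    have : y ∈ Vt 0 ∩ ⋂ i ∈ t, Vt i ∩ Tᶜ := by
      refine ⟨hanti (Nat.zero_le _) hy, mem_iInter₂.2 fun i hi => ⟨?_, hyT⟩⟩
      exact hanti (Finset.le_sup (f := id) hi) hy
    rw [ht] at this
    exact this
  have hbasis : (𝓝 (1 : J ⧸ K)).HasBasis (fun _ : ℕ => True)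
      (fun n => (QuotientGroup.mk : J → J ⧸ K) '' Vt n) := by
    have h1 : ((1 : J ⧸ K)) = ((1 : J) : J ⧸ K) := rfl
    rw [h1, QuotientGroup.nhds_eq]
    constructor
    intro T
    simp only [true_and, Filter.mem_map]
    constructor
    · intro hT
      obtain ⟨O, hOsub, hOopen, hO1⟩ := mem_nhds_iff.1 hT
      have hOK : IsOpen (O * (K : Set J)) := hOopen.mul_right
      have hKsub : (K : Set J) ⊆ O * (K : Set J) := fun k hk =>
        ⟨1, hO1, k, hk, by simp⟩
      have hOKsub : O * (K : Set J) ⊆ (QuotientGroup.mk : J → J ⧸ K) ⁻¹' T := by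
        rintro x ⟨o, ho, k, hk, rfl⟩
        have : (QuotientGroup.mk (o * k) : J ⧸ K) = QuotientGroup.mk o :=
          QuotientGroup.mk_mul_of_mem o hk
        rw [Set.mem_preimage, this]
        exact hOsub ho
      obtain ⟨n, hn⟩ := hkey _ hOK hKsub
      exact ⟨n, (Set.image_subset_iff).2 fun x hx => hOKsub (hn hx)⟩
    · rintro ⟨n, hn⟩
      exact Filter.mem_of_superset (hVnhds n)
        ((Set.subset_preimage_image _ _).trans (Set.preimage_mono hn))
  haveI : (𝓝 (1 : J ⧸ K)).IsCountablyGenerated := hbasis.isCountablyGenerated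
  exact ⟨K, hnormal, hKcomp, hKsubV, KK_secondCountable this⟩
end

section
/- Let G = G₁ × ⋯ × Gₙ be a product of locally compact second countable Hausdorff groups and let Γ ≤ G be a lattice, i.e. a discrete subgroup such that the quotient G/Γ carries a G-invariant Borel probability measure. Let H be a Hausdorff topological group and τ : Γ → H a homomorphism. Suppose there exist two distinct indices i, and for each of them a continuous homomorphism τᵢ : Gᵢ → H, such that the composed homomorphism G → Gᵢ → H (the canonical projection followed by τᵢ) extends τ. Then the closure of τ(Γ) in H is compact. -/
open MeasureTheory Set Pointwise

/-- Monod, Lemma: let `Γ` be a lattice in a product `G = G₁ × ⋯ × Gₙ` of locally compact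
second countable Hausdorff groups and `τ : Γ → H` a homomorphism to a Hausdorff topological
group. If for two distinct indices `i` there are continuous homomorphisms `τᵢ : Gᵢ → H` such
that the compositions `G ↠ Gᵢ → H` extend `τ`, then the closure of `τ(Γ)` is compact. -/
theorem relatively_compact_of_two_extensions
    {ι : Type*} [Fintype ι]
    (G : ι → Type*) [∀ i, Group (G i)] [∀ i, TopologicalSpace (G i)]
    [∀ i, IsTopologicalGroup (G i)] [∀ i, LocallyCompactSpace (G i)]
    [∀ i, SecondCountableTopology (G i)] [∀ i, T2Space (G i)]
    (Γ : Subgroup (∀ i, G i)) [DiscreteTopology Γ]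
    (hlattice : ∃ μ : @MeasureTheory.Measure ((∀ i, G i) ⧸ Γ) (borel _),
      @MeasureTheory.IsProbabilityMeasure _ (borel _) μ ∧
      ∀ g : ∀ i, G i, ∀ s : Set ((∀ i, G i) ⧸ Γ), @MeasurableSet _ (borel _) s →
        μ ((fun y => g • y) ⁻¹' s) = μ s)
    {H : Type*} [Group H] [TopologicalSpace H] [IsTopologicalGroup H] [T2Space H]
    (τ : Γ →* H)
    (i j : ι) (hij : i ≠ j)
    (τi : G i →* H) (τj : G j →* H)
    (hci : Continuous τi) (hcj : Continuous τj)
    (hexti : ∀ γ : Γ, τi ((γ : ∀ k, G k) i) = τ γ)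
    (hextj : ∀ γ : Γ, τj ((γ : ∀ k, G k) j) = τ γ) :
    IsCompact (closure (Set.range fun γ : Γ => τ γ)) := by
  classical
  letI : MeasurableSpace ((∀ k, G k) ⧸ Γ) := borel _
  haveI : BorelSpace ((∀ k, G k) ⧸ Γ) := ⟨rfl⟩
  obtain ⟨μ, hprob, hinv⟩ := hlattice
  haveI : MeasureTheory.IsProbabilityMeasure μ := hprob
  -- T2 on the quotient
  haveI hPD : ProperlyDiscontinuousSMul Γ.op (∀ k, G k) :=
    Subgroup.properlyDiscontinuousSMul_opposite_of_tendsto_cofinite Γ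
      (Subgroup.tendsto_coe_cofinite_of_discrete Γ (SetLike.isDiscrete_iff_discreteTopology.mpr ‹_›))
  haveI hT2 : T2Space ((∀ k, G k) ⧸ Γ) :=
    t2Space_of_properlyDiscontinuousSMul_of_t2Space (Γ := Γ.op) (T := ∀ k, G k)
  -- the map F and its descent f to the quotient
  set F : (∀ k, G k) → H := fun g => τi (g i) * (τj (g j))⁻¹ with hF
  have hFwd : ∀ a b : ∀ k, G k, QuotientGroup.leftRel Γ a b → F a = F b := by
    intro a b hab
    rw [QuotientGroup.leftRel_apply] at hab
    have hγ : τi ((a⁻¹ * b) i) = τj ((a⁻¹ * b) j) := by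
      rw [show (a⁻¹ * b) = ((⟨a⁻¹ * b, hab⟩ : Γ) : ∀ k, G k) from rfl, hexti, hextj]
    have hγ' : (τi (a i))⁻¹ * τi (b i) = (τj (a j))⁻¹ * τj (b j) := by
      simpa [Pi.mul_apply, Pi.inv_apply, map_mul, map_inv] using hγ
    have hb : τi (b i) = τi (a i) * ((τj (a j))⁻¹ * τj (b j)) := by
      rw [← hγ']; group
    show τi (a i) * (τj (a j))⁻¹ = τi (b i) * (τj (b j))⁻¹
    rw [hb]; group
  let f : ((∀ k, G k) ⧸ Γ) → H := fun x => Quotient.liftOn' x F hFwd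
  have hfmk : ∀ g : ∀ k, G k, f (QuotientGroup.mk g) = F g := fun g => rfl
  have hfc : Continuous f := by
    apply Continuous.quotient_liftOn'
    exact ((hci.comp (continuous_apply i)).mul
      ((hcj.comp (continuous_apply j)).inv))
  -- equivariance
  have hequiv : ∀ (γ : Γ) (x : (∀ k, G k) ⧸ Γ),
      f ((Pi.mulSingle i ((γ : ∀ k, G k) i)) • x) = τ γ * f x := by
    intro γ x
    induction x using Quotient.inductionOn' with
    | h g =>
      have : (Quotient.mk'' g : (∀ k, G k) ⧸ Γ) = QuotientGroup.mk g := rfl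
      rw [this, MulAction.Quotient.smul_mk, hfmk, hfmk]
      have h1 : (Pi.mulSingle i ((γ : ∀ k, G k) i) • g) i
          = (γ : ∀ k, G k) i * g i := by
        simp [Pi.mulSingle_eq_same]
      have h2 : (Pi.mulSingle i ((γ : ∀ k, G k) i) • g) j = g j := by
        simp [Pi.mulSingle_eq_of_ne (Ne.symm hij)]
      simp only [hF, h1, h2, map_mul, hexti γ]
      group
  -- σ-compactness of the quotient and a big compact set
  haveI : SigmaCompactSpace ((∀ k, G k) ⧸ Γ) := by
    rw [← isSigmaCompact_univ_iff]
    have h1 : IsSigmaCompact (Set.range (QuotientGroup.mk : (∀ k, G k) → (∀ k, G k) ⧸ Γ)) :=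
      isSigmaCompact_range continuous_quotient_mk'
    rwa [Set.range_eq_univ.2 QuotientGroup.mk_surjective] at h1
  obtain ⟨K, hKc, hKμ⟩ : ∃ K : Set ((∀ k, G k) ⧸ Γ), IsCompact K ∧ (1 : ENNReal) / 2 < μ K := by
    have h1 : μ Set.univ = ⨆ n, μ (compactCovering ((∀ k, G k) ⧸ Γ) n) := by
      conv_lhs => rw [← iUnion_compactCovering ((∀ k, G k) ⧸ Γ)]
      exact Monotone.measure_iUnion (compactCovering_subset _)
    have h2 : (1 : ENNReal) / 2 < μ Set.univ := by
      rw [measure_univ]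
      exact ENNReal.half_lt_self one_ne_zero ENNReal.one_ne_top
    rw [h1, lt_iSup_iff] at h2
    obtain ⟨n, hn⟩ := h2
    exact ⟨_, isCompact_compactCovering _ n, hn⟩
  -- the compact set in H
  set A : Set H := f '' K with hA
  have hAc : IsCompact A := hKc.image hfc
  set C : Set H := A * A⁻¹ with hC
  have hCc : IsCompact C := hAc.mul hAc.inv
  -- every τ γ lies in C
  have hsub : (Set.range fun γ : Γ => τ γ) ⊆ C := by
    rintro - ⟨γ, rfl⟩
    show τ γ ∈ C
    set a : ∀ k, G k := Pi.mulSingle i ((γ : ∀ k, G k) i) with ha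
    set B : Set H := (fun h => τ γ * h) '' A with hB
    have hBc : IsCompact B := hAc.image (continuous_mul_left _)
    have hmeasA : MeasurableSet (f ⁻¹' A) :=
      (hAc.isClosed.preimage hfc).measurableSet
    have hpre : f ⁻¹' B = (fun y => a⁻¹ • y) ⁻¹' (f ⁻¹' A) := by
      ext x
      have hx : f x = τ γ * f (a⁻¹ • x) := by
        have := hequiv γ (a⁻¹ • x)
        rw [← ha, smul_inv_smul] at this
        exact this
      simp only [Set.mem_preimage, hB, Set.mem_image]
      constructor
      · rintro ⟨y, hyA, hxy⟩
        have hyy : y = f (a⁻¹ • x) := mul_left_cancel ((hxy.trans hx) : τ γ * y = τ γ * _)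
        exact hyy ▸ hyA
      · intro hy
        exact ⟨f (a⁻¹ • x), hy, hx.symm⟩
    have hμB : μ (f ⁻¹' B) = μ (f ⁻¹' A) := by
      rw [hpre]; exact hinv a⁻¹ _ hmeasA
    have hKA : K ⊆ f ⁻¹' A := fun x hx => ⟨x, hx, rfl⟩
    have hμA : (1 : ENNReal) / 2 < μ (f ⁻¹' A) := lt_of_lt_of_le hKμ (measure_mono hKA)
    have hne : (A ∩ B).Nonempty := by
      by_contra hcon
      rw [Set.not_nonempty_iff_eq_empty] at hcon
      have hdisj : Disjoint (f ⁻¹' A) (f ⁻¹' B) := by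
        rw [Set.disjoint_iff_inter_eq_empty, ← Set.preimage_inter, hcon, Set.preimage_empty]
      have hmeasB : MeasurableSet (f ⁻¹' B) :=
        (hBc.isClosed.preimage hfc).measurableSet
      have h1 : μ (f ⁻¹' A ∪ f ⁻¹' B) = μ (f ⁻¹' A) + μ (f ⁻¹' B) :=
        measure_union hdisj hmeasB
      have h2 : (1 : ENNReal) < μ (f ⁻¹' A) + μ (f ⁻¹' B) := by
        have := ENNReal.add_lt_add hμA (hμB ▸ hμA)
        rwa [ENNReal.add_halves] at this
      have h3 : μ (f ⁻¹' A ∪ f ⁻¹' B) ≤ 1 := prob_le_one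
      rw [h1] at h3
      exact absurd h3 (not_le.mpr h2)
    obtain ⟨x, hxA, hxB⟩ := hne
    obtain ⟨y, hyA, hxy⟩ := hxB
    have hτγ : τ γ = x * y⁻¹ := by rw [← hxy]; group
    rw [hτγ]
    exact Set.mul_mem_mul hxA (Set.inv_mem_inv.mpr hyA)
  exact hCc.of_isClosed_subset isClosed_closure (closure_minimal hsub hCc.isClosed)
end
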